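/- Let p > 1, 1/p + 1/q = 1, α > 0, β ∈ (0,1], x > 1, and let f, g be positive functions on [1,∞) with H^{α,β}_{1,x}[f](x) < ∞, H^{α,β}_{1,x}[g](x) < ∞. If 0 < m ≤ f(τ)/g(τ) ≤ M < ∞ for τ ∈ (1,x), then (H^{α,β}_{1,x}[f](x))^{1/p} · (H^{α,β}_{1,x}[g](x))^{1/q} ≤ (M/m)^{1/(pq)} · H^{α,β}_{1,x}[f^{1/p} g^{1/q}](x). -/
import Mathlib


open MeasureTheory Real

/-- Kernel of the generalized proportional Hadamard fractional integral. -/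
noncomputable def Hker (α β x : ℝ) (z : ℝ → ℝ) (t : ℝ) : ℝ :=
  Real.exp ((β - 1) / β * (Real.log x - Real.log t)) *
    (Real.log x - Real.log t) ^ (α - 1) * z t / t

/-- The one-sided generalized proportional Hadamard fractional integral
`H^{α,β}_{1,x}[z](x)`. -/
noncomputable def H (α β x : ℝ) (z : ℝ → ℝ) : ℝ :=
  (1 / (β ^ α * Real.Gamma α)) * ∫ t in Set.Ioo 1 x, Hker α β x z t

lemma Hker_le_aux (α β x c : ℝ) (z₁ z₂ : ℝ → ℝ) (t : ℝ) (ht : t ∈ Set.Ioo 1 x)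
    (hz : z₁ t ≤ c * z₂ t) : Hker α β x z₁ t ≤ c * Hker α β x z₂ t := by
  obtain ⟨ht1, htx⟩ := ht
  have ht0 : (0:ℝ) < t := by linarith
  have hlog : 0 < Real.log x - Real.log t := by
    have := Real.log_lt_log ht0 htx; linarith
  have hE : 0 < Real.exp ((β - 1) / β * (Real.log x - Real.log t)) := Real.exp_pos _
  have hP : 0 < (Real.log x - Real.log t) ^ (α - 1) := Real.rpow_pos_of_pos hlog _
  unfold Hker
  have h1 : Real.exp ((β - 1) / β * (Real.log x - Real.log t)) *
      (Real.log x - Real.log t) ^ (α - 1) * z₁ t ≤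
      Real.exp ((β - 1) / β * (Real.log x - Real.log t)) *
      (Real.log x - Real.log t) ^ (α - 1) * (c * z₂ t) := by
    apply mul_le_mul_of_nonneg_left hz (by positivity)
  calc Real.exp ((β - 1) / β * (Real.log x - Real.log t)) *
      (Real.log x - Real.log t) ^ (α - 1) * z₁ t / t
      ≤ Real.exp ((β - 1) / β * (Real.log x - Real.log t)) *
      (Real.log x - Real.log t) ^ (α - 1) * (c * z₂ t) / t := by
        exact div_le_div_of_nonneg_right h1 ht0.le
    _ = c * (Real.exp ((β - 1) / β * (Real.log x - Real.log t)) *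
      (Real.log x - Real.log t) ^ (α - 1) * z₂ t / t) := by ring

lemma Hker_nonneg_aux (α β x : ℝ) (z : ℝ → ℝ) (t : ℝ) (ht : t ∈ Set.Ioo 1 x)
    (hz : 0 ≤ z t) : 0 ≤ Hker α β x z t := by
  obtain ⟨ht1, htx⟩ := ht
  have ht0 : (0:ℝ) < t := by linarith
  have hlog : 0 < Real.log x - Real.log t := by
    have := Real.log_lt_log ht0 htx; linarith
  have hP : 0 < (Real.log x - Real.log t) ^ (α - 1) := Real.rpow_pos_of_pos hlog _
  unfold Hker
  positivity

lemma H_le_aux (α β x c : ℝ) (z₁ z₂ : ℝ → ℝ) (hα : 0 < α) (hβ : 0 < β)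
    (h1 : IntegrableOn (Hker α β x z₁) (Set.Ioo 1 x))
    (h2 : IntegrableOn (Hker α β x z₂) (Set.Ioo 1 x))
    (hz : ∀ t ∈ Set.Ioo 1 x, Hker α β x z₁ t ≤ c * Hker α β x z₂ t) :
    H α β x z₁ ≤ c * H α β x z₂ := by
  unfold H
  have hΓ : 0 < Real.Gamma α := Real.Gamma_pos_of_pos hα
  have hβα : 0 < β ^ α := Real.rpow_pos_of_pos hβ α
  rw [mul_left_comm]
  apply mul_le_mul_of_nonneg_left _ (by positivity)
  rw [← MeasureTheory.integral_const_mul]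
  exact setIntegral_mono_on h1 (h2.const_mul c) measurableSet_Ioo hz

lemma H_nonneg_aux (α β x : ℝ) (z : ℝ → ℝ) (hα : 0 < α) (hβ : 0 < β)
    (hz : ∀ t ∈ Set.Ioo 1 x, 0 ≤ z t) : 0 ≤ H α β x z := by
  have hΓ : 0 < Real.Gamma α := Real.Gamma_pos_of_pos hα
  have hβα : 0 < β ^ α := Real.rpow_pos_of_pos hβ α
  apply mul_nonneg (by positivity)
  exact setIntegral_nonneg measurableSet_Ioo fun t ht => Hker_nonneg_aux α β x z t ht (hz t ht)

theorem stmt_7 (p q α β m M x : ℝ) (f g : ℝ → ℝ) (hp : 1 < p)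
    (hpq : 1 / p + 1 / q = 1) (hα : 0 < α) (hβ : β ∈ Set.Ioc (0:ℝ) 1) (hx : 1 < x)
    (hf : ∀ t ∈ Set.Ici (1:ℝ), 0 < f t) (hg : ∀ t ∈ Set.Ici (1:ℝ), 0 < g t)
    (hfint : IntegrableOn (Hker α β x f) (Set.Ioo 1 x))
    (hgint : IntegrableOn (Hker α β x g) (Set.Ioo 1 x))
    (hm : 0 < m)
    (hbound : ∀ t ∈ Set.Ioo (1:ℝ) x, m ≤ f t / g t ∧ f t / g t ≤ M) :
    (H α β x f) ^ (1 / p) * (H α β x g) ^ (1 / q) ≤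
      (M / m) ^ (1 / (p * q)) * H α β x (fun t => f t ^ (1 / p) * g t ^ (1 / q)) := by
  have hβ0 : 0 < β := hβ.1
  have hp0 : 0 < p := by linarith
  have hip : 0 < 1 / p := by positivity
  have hip1 : 1 / p < 1 := by
    rw [div_lt_one hp0]; exact hp
  have hiq : 0 < 1 / q := by linarith
  have hq0 : 0 < q := by
    by_contra h
    push_neg at h
    have : 1 / q ≤ 0 := div_nonpos_of_nonneg_of_nonpos zero_le_one h
    linarith
  have hM : 0 < M := by
    have hmem : (1 + x) / 2 ∈ Set.Ioo (1:ℝ) x := ⟨by linarith, by linarith⟩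
    obtain ⟨h1, h2⟩ := hbound _ hmem
    linarith
  set hfun : ℝ → ℝ := fun t => f t ^ (1 / p) * g t ^ (1 / q) with hhdef
  have hfpos : ∀ t ∈ Set.Ioo (1:ℝ) x, 0 < f t := fun t ht => hf t (le_of_lt ht.1)
  have hgpos : ∀ t ∈ Set.Ioo (1:ℝ) x, 0 < g t := fun t ht => hg t (le_of_lt ht.1)
  have hfM : ∀ t ∈ Set.Ioo (1:ℝ) x, f t ≤ M * g t := by
    intro t ht
    exact (div_le_iff₀ (hgpos t ht)).mp (hbound t ht).2
  have hgm : ∀ t ∈ Set.Ioo (1:ℝ) x, g t ≤ (1 / m) * f t := by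
    intro t ht
    have h2 : m * g t ≤ f t := (le_div_iff₀ (hgpos t ht)).mp (hbound t ht).1
    rw [one_div, ← div_eq_inv_mul]
    exact (le_div_iff₀ hm).mpr (by nlinarith)
  have key1 : ∀ t ∈ Set.Ioo (1:ℝ) x, f t ≤ M ^ (1 / q) * hfun t := by
    intro t ht
    have hft := hfpos t ht
    have hgt := hgpos t ht
    have h0 : f t = f t ^ (1 / p) * f t ^ (1 / q) := by
      rw [← Real.rpow_add hft, hpq, Real.rpow_one]
    have h1 : f t ^ (1 / q) ≤ M ^ (1 / q) * g t ^ (1 / q) := by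
      rw [← Real.mul_rpow hM.le hgt.le]
      exact Real.rpow_le_rpow hft.le (hfM t ht) hiq.le
    calc f t = f t ^ (1 / p) * f t ^ (1 / q) := h0
      _ ≤ f t ^ (1 / p) * (M ^ (1 / q) * g t ^ (1 / q)) :=
          mul_le_mul_of_nonneg_left h1 (Real.rpow_nonneg hft.le _)
      _ = M ^ (1 / q) * (f t ^ (1 / p) * g t ^ (1 / q)) := by ring
      _ = M ^ (1 / q) * hfun t := rfl
  have key2 : ∀ t ∈ Set.Ioo (1:ℝ) x, g t ≤ (1 / m) ^ (1 / p) * hfun t := by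
    intro t ht
    have hft := hfpos t ht
    have hgt := hgpos t ht
    have h0 : g t = g t ^ (1 / p) * g t ^ (1 / q) := by
      rw [← Real.rpow_add hgt, hpq, Real.rpow_one]
    have h1 : g t ^ (1 / p) ≤ (1 / m) ^ (1 / p) * f t ^ (1 / p) := by
      rw [← Real.mul_rpow (by positivity) hft.le]
      exact Real.rpow_le_rpow hgt.le (hgm t ht) hip.le
    calc g t = g t ^ (1 / p) * g t ^ (1 / q) := h0
      _ ≤ ((1 / m) ^ (1 / p) * f t ^ (1 / p)) * g t ^ (1 / q) :=
          mul_le_mul_of_nonneg_right h1 (Real.rpow_nonneg hgt.le _)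
      _ = (1 / m) ^ (1 / p) * (f t ^ (1 / p) * g t ^ (1 / q)) := by ring
      _ = (1 / m) ^ (1 / p) * hfun t := rfl
  have key3 : ∀ t ∈ Set.Ioo (1:ℝ) x, hfun t ≤ M ^ (1 / p) * g t := by
    intro t ht
    have hft := hfpos t ht
    have hgt := hgpos t ht
    have h1 : f t ^ (1 / p) ≤ M ^ (1 / p) * g t ^ (1 / p) := by
      rw [← Real.mul_rpow hM.le hgt.le]
      exact Real.rpow_le_rpow hft.le (hfM t ht) hip.le
    calc hfun t = f t ^ (1 / p) * g t ^ (1 / q) := rfl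
      _ ≤ (M ^ (1 / p) * g t ^ (1 / p)) * g t ^ (1 / q) :=
          mul_le_mul_of_nonneg_right h1 (Real.rpow_nonneg hgt.le _)
      _ = M ^ (1 / p) * (g t ^ (1 / p) * g t ^ (1 / q)) := by ring
      _ = M ^ (1 / p) * g t := by
          rw [← Real.rpow_add hgt, hpq, Real.rpow_one]
  have hlogpos : ∀ t ∈ Set.Ioo (1:ℝ) x, 0 < Real.log x - Real.log t := by
    intro t ht
    obtain ⟨ht1, htx⟩ := ht
    have ht0 : (0:ℝ) < t := by linarith
    have := Real.log_lt_log ht0 htx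
    linarith
  have hK2 : AEMeasurable (fun t : ℝ => Real.exp ((β - 1) / β * (Real.log x - Real.log t)) *
      (Real.log x - Real.log t) ^ (α - 1)) (volume.restrict (Set.Ioo 1 x)) := by
    have hmeas : Measurable (fun t : ℝ =>
        Real.exp ((β - 1) / β * (Real.log x - Real.log t)) *
        Real.exp (Real.log (Real.log x - Real.log t) * (α - 1))) :=
      (((measurable_const.sub Real.measurable_log).const_mul _).exp).mul
        (((Real.measurable_log.comp (measurable_const.sub Real.measurable_log)).mul_const _).exp)
    apply hmeas.aemeasurable.congr
    filter_upwards [ae_restrict_mem measurableSet_Ioo] with t ht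
    rw [Real.rpow_def_of_pos (hlogpos t ht)]
  have hKne : ∀ t ∈ Set.Ioo (1:ℝ) x,
      Real.exp ((β - 1) / β * (Real.log x - Real.log t)) *
      (Real.log x - Real.log t) ^ (α - 1) ≠ 0 ∧ t ≠ 0 := by
    intro t ht
    have hP : 0 < (Real.log x - Real.log t) ^ (α - 1) :=
      Real.rpow_pos_of_pos (hlogpos t ht) _
    have ht0 : (0:ℝ) < t := by linarith [ht.1]
    exact ⟨by positivity, ne_of_gt ht0⟩
  have hfm : AEMeasurable f (volume.restrict (Set.Ioo 1 x)) := by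
    have h1 : AEMeasurable (fun t => Hker α β x f t * t /
        (Real.exp ((β - 1) / β * (Real.log x - Real.log t)) *
        (Real.log x - Real.log t) ^ (α - 1))) (volume.restrict (Set.Ioo 1 x)) :=
      (hfint.aemeasurable.mul measurable_id.aemeasurable).div hK2
    apply h1.congr
    filter_upwards [ae_restrict_mem measurableSet_Ioo] with t ht
    obtain ⟨hKne1, ht0⟩ := hKne t ht
    unfold Hker
    rw [div_mul_cancel₀ _ ht0, mul_div_cancel_left₀ _ hKne1]
  have hgm' : AEMeasurable g (volume.restrict (Set.Ioo 1 x)) := by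
    have h1 : AEMeasurable (fun t => Hker α β x g t * t /
        (Real.exp ((β - 1) / β * (Real.log x - Real.log t)) *
        (Real.log x - Real.log t) ^ (α - 1))) (volume.restrict (Set.Ioo 1 x)) :=
      (hgint.aemeasurable.mul measurable_id.aemeasurable).div hK2
    apply h1.congr
    filter_upwards [ae_restrict_mem measurableSet_Ioo] with t ht
    obtain ⟨hKne1, ht0⟩ := hKne t ht
    unfold Hker
    rw [div_mul_cancel₀ _ ht0, mul_div_cancel_left₀ _ hKne1]
  have hfunm : AEMeasurable hfun (volume.restrict (Set.Ioo 1 x)) := by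
    have h1 : AEMeasurable (fun t =>
        Real.exp (Real.log (f t) * (1 / p)) * Real.exp (Real.log (g t) * (1 / q)))
        (volume.restrict (Set.Ioo 1 x)) :=
      ((Real.measurable_exp.comp_aemeasurable
          ((Real.measurable_log.comp_aemeasurable hfm).mul_const _))).mul
        ((Real.measurable_exp.comp_aemeasurable
          ((Real.measurable_log.comp_aemeasurable hgm').mul_const _)))
    apply h1.congr
    filter_upwards [ae_restrict_mem measurableSet_Ioo] with t ht
    show Real.exp (Real.log (f t) * (1 / p)) * Real.exp (Real.log (g t) * (1 / q)) = hfun t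
    rw [← Real.rpow_def_of_pos (hfpos t ht), ← Real.rpow_def_of_pos (hgpos t ht)]
  have hhm : AEMeasurable (Hker α β x hfun) (volume.restrict (Set.Ioo 1 x)) := by
    have heq : Hker α β x hfun = fun t =>
        (Real.exp ((β - 1) / β * (Real.log x - Real.log t)) *
        (Real.log x - Real.log t) ^ (α - 1)) * hfun t / t := rfl
    rw [heq]
    exact (hK2.mul hfunm).div measurable_id.aemeasurable
  have hhint : IntegrableOn (Hker α β x hfun) (Set.Ioo 1 x) := by
    apply Integrable.mono' (hgint.const_mul (M ^ (1 / p))) hhm.aestronglyMeasurable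
    filter_upwards [ae_restrict_mem measurableSet_Ioo] with t ht
    have hnn : 0 ≤ Hker α β x hfun t := by
      apply Hker_nonneg_aux α β x hfun t ht
      have hft := hfpos t ht
      have hgt := hgpos t ht
      positivity
    rw [Real.norm_eq_abs, abs_of_nonneg hnn]
    exact Hker_le_aux α β x _ hfun g t ht (key3 t ht)
  have hA : 0 ≤ H α β x f := H_nonneg_aux α β x f hα hβ0 fun t ht => (hfpos t ht).le
  have hB : 0 ≤ H α β x g := H_nonneg_aux α β x g hα hβ0 fun t ht => (hgpos t ht).le
  have hC : 0 ≤ H α β x hfun := by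
    apply H_nonneg_aux α β x hfun hα hβ0
    intro t ht
    have hft := hfpos t ht
    have hgt := hgpos t ht
    positivity
  have hAC : H α β x f ≤ M ^ (1 / q) * H α β x hfun :=
    H_le_aux α β x _ f hfun hα hβ0 hfint hhint fun t ht =>
      Hker_le_aux α β x _ f hfun t ht (key1 t ht)
  have hBC : H α β x g ≤ (1 / m) ^ (1 / p) * H α β x hfun :=
    H_le_aux α β x _ g hfun hα hβ0 hgint hhint fun t ht =>
      Hker_le_aux α β x _ g hfun t ht (key2 t ht)
  have hMq : (0:ℝ) ≤ M ^ (1 / q) := Real.rpow_nonneg hM.le _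
  have hmp : (0:ℝ) ≤ (1 / m) ^ (1 / p) := Real.rpow_nonneg (by positivity) _
  calc (H α β x f) ^ (1 / p) * (H α β x g) ^ (1 / q)
      ≤ (M ^ (1 / q) * H α β x hfun) ^ (1 / p) *
        ((1 / m) ^ (1 / p) * H α β x hfun) ^ (1 / q) :=
        mul_le_mul (Real.rpow_le_rpow hA hAC hip.le)
          (Real.rpow_le_rpow hB hBC hiq.le)
          (Real.rpow_nonneg hB _) (Real.rpow_nonneg (by positivity) _)
    _ = ((M ^ (1 / q)) ^ (1 / p) * ((1 / m) ^ (1 / p)) ^ (1 / q)) *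
        ((H α β x hfun) ^ (1 / p) * (H α β x hfun) ^ (1 / q)) := by
        rw [Real.mul_rpow hMq hC, Real.mul_rpow hmp hC]; ring
    _ = (M / m) ^ (1 / (p * q)) * H α β x hfun := by
        have e1 : (M ^ (1 / q)) ^ (1 / p) = M ^ (1 / (p * q)) := by
          rw [← Real.rpow_mul hM.le]
          congr 1
          rw [div_mul_div_comm, one_mul, mul_comm]
        have e2 : ((1 / m) ^ (1 / p)) ^ (1 / q) = (1 / m) ^ (1 / (p * q)) := by
          rw [← Real.rpow_mul (by positivity)]
          congr 1
          rw [div_mul_div_comm, one_mul]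
        have e3 : (H α β x hfun) ^ (1 / p) * (H α β x hfun) ^ (1 / q) = H α β x hfun := by
          rw [← Real.rpow_add' hC (by rw [hpq]; norm_num), hpq, Real.rpow_one]
        rw [e1, e2, e3, ← Real.mul_rpow hM.le (by positivity), mul_one_div]
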